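/- Let R be a commutative Noetherian domain with field of fractions K, and let I be a nonzero ideal of R. Then the quotient I⁻¹/R of R-modules is isomorphic (as an R-module) to Ext¹_R(R/I, R), where I⁻¹ = {q ∈ K : qI ⊆ R}. -/

import Mathlib

open CategoryTheory CategoryTheory.Limits CategoryTheory.Projective

noncomputable section

namespace ExtAux

universe v u
variable {C : Type u} [Category.{v} C] [Abelian C] [EnoughProjectives C]
variable {Z P0 : C}

/-- Resolution complex starting from a chosen morphism `p : P0 ⟶ Z`. -/
def resComplex (p : P0 ⟶ Z) : ChainComplex C ℕ :=
  ChainComplex.mk' P0 (syzygies p) (d p) fun f => ⟨_, d f, (Category.assoc _ _ _).trans ((congrArg _ (kernel.condition _)).trans comp_zero)⟩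

lemma resComplex_d_1_0 (p : P0 ⟶ Z) : (resComplex p).d 1 0 = d p := by
  simp [resComplex]

lemma resComplex_exactAt_succ (p : P0 ⟶ Z) (n : ℕ) :
    (resComplex p).ExactAt (n + 1) := by
  rw [HomologicalComplex.exactAt_iff' _ (n + 1 + 1) (n + 1) n (by simp) (by simp)]
  have h := exact_d_f ((resComplex p).d (n + 1) n)
  let e : (resComplex p).X (n + 2) ≅ syzygies ((resComplex p).d (n + 1) n) :=
    ChainComplex.mk'XIso _ _ _ _ n
  have hd : (resComplex p).d (n + 2) (n + 1) = e.hom ≫ d ((resComplex p).d (n + 1) n) :=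
    ChainComplex.mk'_d _ _ _ _ n
  refine (ShortComplex.exact_iff_of_iso ?_).1 h
  refine ShortComplex.isoMk e.symm (Iso.refl _) (Iso.refl _) ?_ ?_
  · show e.inv ≫ (resComplex p).d (n + 2) (n + 1) = d ((resComplex p).d (n + 1) n) ≫ 𝟙 _
    rw [hd, Iso.inv_hom_id_assoc, Category.comp_id]
  · show 𝟙 _ ≫ (resComplex p).d (n + 1) n = (resComplex p).d (n + 1) n ≫ 𝟙 _
    rw [Category.id_comp, Category.comp_id]

instance resComplex_projective (p : P0 ⟶ Z) [Projective P0] (n : ℕ) :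
    Projective ((resComplex p).X n) := by
  obtain (_ | _ | _ | n) := n
  · exact (inferInstance : Projective P0)
  · apply Projective.projective_over
  · apply Projective.projective_over
  · apply Projective.projective_over

/-- A projective resolution built from a chosen epimorphism from a projective object. -/
def res (p : P0 ⟶ Z) [Projective P0] [Epi p] : ProjectiveResolution Z where
  complex := resComplex p
  π := (ChainComplex.toSingle₀Equiv _ _).symm ⟨p, by
          rw [resComplex_d_1_0]; exact (Category.assoc _ _ _).trans ((congrArg _ (kernel.condition _)).trans comp_zero)⟩
  quasiIso := ⟨fun n => by
    cases n
    · rw [ChainComplex.quasiIsoAt₀_iff, ShortComplex.quasiIso_iff_of_zeros']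
      · refine (ShortComplex.exact_and_epi_g_iff_of_iso ?_).2
          ⟨exact_d_f p, by dsimp; infer_instance⟩
        exact ShortComplex.isoMk (Iso.refl _) (Iso.refl _) (Iso.refl _)
          (by simp [resComplex]; exact (Category.id_comp _).trans (Category.comp_id _).symm)
          (by simp; exact (Category.id_comp _).trans ((Category.comp_id _).symm.trans (congrArg (· ≫ 𝟙 Z) (ChainComplex.toSingle₀Equiv_symm_apply_f_zero (C := resComplex p) (X := Z) p _).symm)))
      all_goals rfl
    · rw [quasiIsoAt_iff_exactAt']
      · apply resComplex_exactAt_succ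
      · apply ChainComplex.exactAt_succ_single_obj⟩

section Modules

variable {R : Type} [CommRing R] (I : Ideal R)

abbrev pI : ModuleCat.of R R ⟶ ModuleCat.of R (R ⧸ I) := ModuleCat.ofHom I.mkQ

instance : Projective (ModuleCat.of R R) :=
  ModuleCat.projective_of_free (Module.Basis.singleton PUnit.{1} R)

instance : Epi (pI I) := (ModuleCat.epi_iff_surjective _).2 (by exact Submodule.mkQ_surjective I)

abbrev CX : ChainComplex (ModuleCat R) ℕ := resComplex (pI I)

/-- The differential `P₁ ⟶ P₀ = R` of the resolution, as a linear map. -/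
def d10 : ((CX I).X 1 : Type) →ₗ[R] R := ((CX I).d 1 0).hom

/-- The differential `P₂ ⟶ P₁` of the resolution, as a linear map. -/
def d21 : ((CX I).X 2 : Type) →ₗ[R] ((CX I).X 1 : Type) := ((CX I).d 2 1).hom

lemma range_d10 : LinearMap.range (d10 I) = I := by
  show LinearMap.range ((CX I).d 1 0).hom = I
  rw [resComplex_d_1_0]
  show LinearMap.range (Projective.π (kernel (pI I)) ≫ kernel.ι (pI I)).hom = I
  rw [ModuleCat.hom_comp, LinearMap.range_comp, ModuleCat.range_eq_top_of_epi,
    Submodule.map_top]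
  rw [← ModuleCat.kernelIsoKer_hom_ker_subtype, ModuleCat.hom_comp, LinearMap.range_comp,
    ModuleCat.range_eq_top_of_epi, Submodule.map_top, ModuleCat.hom_ofHom]
  exact (Submodule.range_subtype _).trans (Submodule.ker_mkQ I)

lemma d10_mem (x : (CX I).X 1) : d10 I x ∈ I := by
  have := LinearMap.mem_range_self (d10 I) x
  rwa [range_d10] at this

lemma exact21 (x : (CX I).X 1) (hx : d10 I x = 0) :
    ∃ y, d21 I y = x := by
  have h := resComplex_exactAt_succ (pI I) 0
  rw [HomologicalComplex.exactAt_iff' _ 2 1 0 (by simp) (by simp)] at h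
  rw [ShortComplex.moduleCat_exact_iff] at h
  exact h x (by exact hx)

lemma d10_d21 (y : (CX I).X 2) : d10 I (d21 I y) = 0 :=
  DFunLike.congr_fun (congrArg ModuleCat.Hom.hom ((CX I).d_comp_d 2 1 0)) y

variable {K : Type} [Field K] [Algebra R K] [IsFractionRing R K]

variable (R K) in
def e1 : R ≃ₗ[R] (1 : Submodule R K) :=
  (LinearEquiv.ofInjective (Algebra.linearMap R K) (IsFractionRing.injective R K)).trans
    (LinearEquiv.ofEq _ _ Submodule.one_eq_range.symm)

lemma algebraMap_e1_symm (y : (1 : Submodule R K)) :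
    algebraMap R K ((e1 R K).symm y) = (y : K) :=
  congrArg Subtype.val ((e1 R K).apply_symm_apply y)

variable (K) in
def Iinv0 : Submodule R K := 1 / Submodule.map (Algebra.linearMap R K) I

lemma mul_mem_one {q : K} (hq : q ∈ Iinv0 I K) (x : (CX I).X 1) :
    q * algebraMap R K (d10 I x) ∈ (1 : Submodule R K) :=
  Submodule.mem_div_iff_forall_mul_mem.1 hq _ ⟨d10 I x, d10_mem I x, rfl⟩

/-- the linear map `P₁ → R`, `x ↦ q * d₁₀ x` for `q` in the inverse of `I`. -/
def Fq {q : K} (hq : q ∈ Iinv0 I K) : ((CX I).X 1 : Type) →ₗ[R] R :=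
  (e1 R K).symm.toLinearMap.comp
    (LinearMap.codRestrict _ (q • ((Algebra.linearMap R K).comp (d10 I)))
      fun x => mul_mem_one I hq x)

lemma algebraMap_Fq {q : K} (hq : q ∈ Iinv0 I K) (x : (CX I).X 1) :
    algebraMap R K (Fq I hq x) = q * algebraMap R K (d10 I x) :=
  algebraMap_e1_symm _

variable (K) in
abbrev SC : ShortComplex (ModuleCat R) :=
  ((CX I).linearYonedaObj R (ModuleCat.of R R)).sc' 0 1 2

lemma SC_g_apply (φ : (CX I).X 1 ⟶ ModuleCat.of R R) :
    (SC I).g.hom φ = ModuleCat.ofHom (φ.hom.comp (d21 I)) := rfl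
lemma SC_f_apply (φ : (CX I).X 0 ⟶ ModuleCat.of R R) :
    (SC I).f.hom φ = ModuleCat.ofHom (φ.hom.comp (d10 I)) := rfl

lemma Fq_mem_ker {q : K} (hq : q ∈ Iinv0 I K) : (SC I).g.hom (ModuleCat.ofHom (Fq I hq)) = 0 := by
  refine (SC_g_apply I _).trans ?_
  apply ModuleCat.hom_ext
  apply LinearMap.ext; intro y
  apply IsFractionRing.injective R K
  show algebraMap R K (Fq I hq (d21 I y)) = algebraMap R K 0
  rw [algebraMap_Fq I hq, d10_d21, map_zero, mul_zero]

variable (K) in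
def Phi : (Iinv0 I K : Type) →ₗ[R] LinearMap.ker (SC I).g.hom where
  toFun q := ⟨ModuleCat.ofHom (Fq I q.2), Fq_mem_ker I q.2⟩
  map_add' q q' := by
    apply Subtype.ext
    apply ModuleCat.hom_ext
    apply LinearMap.ext; intro x
    apply IsFractionRing.injective R K
    show algebraMap R K (Fq I (q + q').2 x) = algebraMap R K (Fq I q.2 x + Fq I q'.2 x)
    rw [map_add, algebraMap_Fq, algebraMap_Fq, algebraMap_Fq, Submodule.coe_add, add_mul]
  map_smul' r q := by
    apply Subtype.ext
    apply ModuleCat.hom_ext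
    apply LinearMap.ext; intro x
    apply IsFractionRing.injective R K
    show algebraMap R K (Fq I (r • q).2 x) = algebraMap R K (r • Fq I q.2 x)
    rw [algebraMap_Fq, Submodule.coe_smul, smul_eq_mul, map_mul, smul_mul_assoc,
      algebraMap_Fq, Algebra.smul_def]

variable (K) in
def phibar : (Iinv0 I K : Type) →ₗ[R] ((SC I).moduleCatLeftHomologyData.H : Type) :=
  (LinearMap.range (SC I).moduleCatToCycles).mkQ.comp (Phi I K)

lemma rel_aux (φ : ((CX I).X 1 : Type) →ₗ[R] R) (hφ : ∀ y, φ (d21 I y) = 0)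
    (x₀ x : (CX I).X 1) :
    (d10 I x₀) * φ x = (d10 I x) * φ x₀ := by
  have hz : d10 I ((d10 I x₀) • x - (d10 I x) • x₀) = 0 := by
    rw [map_sub, map_smul, map_smul, smul_eq_mul, smul_eq_mul]
    ring
  obtain ⟨y, hy⟩ := exact21 I _ hz
  have h0 := hφ y
  rw [hy, map_sub, map_smul, map_smul, smul_eq_mul, smul_eq_mul] at h0
  linear_combination h0

lemma exists_q (hI : I ≠ ⊥) (φ : ((CX I).X 1 : Type) →ₗ[R] R)
    (hφ : ∀ y, φ (d21 I y) = 0) :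
    ∃ q : (Iinv0 I K : Type), Fq I q.2 = φ := by
  obtain ⟨a, haI, ha⟩ := Submodule.exists_mem_ne_zero_of_ne_bot hI
  obtain ⟨x₀, hx₀⟩ : a ∈ LinearMap.range (d10 I) := by rw [range_d10]; exact haI
  have hane : algebraMap R K a ≠ 0 :=
    (map_ne_zero_iff _ (IsFractionRing.injective R K)).2 ha
  set q : K := algebraMap R K (φ x₀) * (algebraMap R K a)⁻¹ with hqdef
  have hqcalc : ∀ x, q * algebraMap R K (d10 I x) = algebraMap R K (φ x) := by
    intro x
    have h := rel_aux I φ hφ x₀ x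
    rw [hx₀] at h
    have h2 : algebraMap R K (φ x₀) * algebraMap R K (d10 I x)
        = algebraMap R K (φ x) * algebraMap R K a := by
      rw [← map_mul, ← map_mul]
      congr 1
      rw [mul_comm, mul_comm (φ x) a]
      exact h.symm
    rw [hqdef, mul_right_comm, h2, mul_assoc, mul_inv_cancel₀ hane, mul_one]
  have hq : q ∈ Iinv0 I K := by
    rw [Iinv0, Submodule.mem_div_iff_forall_mul_mem]
    rintro y ⟨b, hbI, rfl⟩
    obtain ⟨x, hx⟩ : b ∈ LinearMap.range (d10 I) := by rw [range_d10]; exact hbI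
    rw [Submodule.mem_one]
    exact ⟨φ x, by rw [← hx]; exact (hqcalc x).symm⟩
  refine ⟨⟨q, hq⟩, ?_⟩
  apply LinearMap.ext; intro x
  apply IsFractionRing.injective R K
  rw [algebraMap_Fq, hqcalc]

lemma phibar_surjective (hI : I ≠ ⊥) : Function.Surjective (phibar I K) := by
  intro t
  obtain ⟨c, rfl⟩ := Submodule.mkQ_surjective _ t
  let φ : ((CX I).X 1 : Type) →ₗ[R] R := c.1.hom
  have hc : φ.comp (d21 I) = 0 := congrArg ModuleCat.Hom.hom c.2
  have hφ' : ∀ y, φ (d21 I y) = 0 := fun y => DFunLike.congr_fun hc y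
  obtain ⟨q, hq⟩ := exists_q I (K := K) hI _ hφ'
  refine ⟨q, ?_⟩
  show (LinearMap.range (SC I).moduleCatToCycles).mkQ (Phi I K q) = _
  exact congrArg _ (Subtype.ext (ModuleCat.hom_ext hq))

lemma ker_phibar (hI : I ≠ ⊥) :
    LinearMap.ker (phibar I K) = (1 : Submodule R K).comap (Iinv0 I K).subtype := by
  obtain ⟨a, haI, ha⟩ := Submodule.exists_mem_ne_zero_of_ne_bot hI
  obtain ⟨x₀, hx₀⟩ : a ∈ LinearMap.range (d10 I) := by rw [range_d10]; exact haI
  have hane : algebraMap R K a ≠ 0 :=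
    (map_ne_zero_iff _ (IsFractionRing.injective R K)).2 ha
  ext q
  simp only [LinearMap.mem_ker, Submodule.mem_comap, Submodule.subtype_apply]
  constructor
  · intro h
    have h' : (Phi I K q : LinearMap.ker (SC I).g.hom)
        ∈ LinearMap.range (SC I).moduleCatToCycles :=
      (Submodule.Quotient.mk_eq_zero _).1 h
    obtain ⟨h0, hh⟩ := h'
    let h0' : (R : Type) →ₗ[R] R := h0.hom
    have hveq : h0'.comp (d10 I) = Fq I q.2 := congrArg ModuleCat.Hom.hom (congrArg Subtype.val hh)
    have hval : ∀ x, h0' (d10 I x) = Fq I q.2 x := fun x => DFunLike.congr_fun hveq x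
    have hr : ∀ b : R, h0' b = b * h0' (1 : R) := by
      intro b
      calc h0' b = h0' (b • (1 : R)) := by rw [smul_eq_mul, mul_one]
      _ = b • h0' (1 : R) := map_smul _ b 1
      _ = b * h0' (1 : R) := smul_eq_mul ..
    have h2 := algebraMap_Fq I q.2 x₀
    rw [← hval x₀, hx₀, hr a, map_mul] at h2
    rw [Submodule.mem_one]
    refine ⟨h0' (1 : R), ?_⟩
    apply mul_right_cancel₀ hane
    rw [← h2]
    ring
  · intro hq1
    rw [Submodule.mem_one] at hq1
    obtain ⟨r, hr⟩ := hq1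
    show (phibar I K) q = 0
    have : Phi I K q ∈ LinearMap.range (SC I).moduleCatToCycles := by
      refine ⟨ModuleCat.ofHom (r • LinearMap.id : (R : Type) →ₗ[R] R), ?_⟩
      apply Subtype.ext
      apply ModuleCat.hom_ext
      apply LinearMap.ext; intro x
      apply IsFractionRing.injective R K
      show algebraMap R K ((r • (LinearMap.id : (R : Type) →ₗ[R] R)) (d10 I x))
        = algebraMap R K (Fq I q.2 x)
      rw [algebraMap_Fq, LinearMap.smul_apply, LinearMap.id_apply, smul_eq_mul, map_mul, hr]
    exact (Submodule.Quotient.mk_eq_zero _).2 this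

end Modules

end ExtAux

open CategoryTheory

/-- Let `R` be a commutative Noetherian domain with field of fractions `K`, and `I` a nonzero
ideal of `R`. Then `I⁻¹/R ≅ Ext¹_R(R/I, R)`, where `I⁻¹ = {q ∈ K : qI ⊆ R}` (formalized as the
submodule quotient `(1 : Submodule R K) / IK`, whose membership condition is exactly
`∀ y ∈ IK, q * y ∈ R`). -/
theorem stmt0 (R : Type) [CommRing R] [IsDomain R] [IsNoetherianRing R]
    (K : Type) [Field K] [Algebra R K] [IsFractionRing R K]
    (I : Ideal R) (hI : I ≠ ⊥)
    (Iinv : Submodule R K)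
    (hIinv : Iinv = (1 : Submodule R K) / (Submodule.map (Algebra.linearMap R K) I)) :
    Nonempty ((Iinv ⧸ ((1 : Submodule R K).comap Iinv.subtype)) ≃ₗ[R]
      ((Ext R (ModuleCat R) 1).obj (Opposite.op (ModuleCat.of R (R ⧸ I)))).obj
        (ModuleCat.of R R)) := by
  have hIinv' : Iinv = ExtAux.Iinv0 I K := hIinv
  subst hIinv'
  let e2 : ((ExtAux.Iinv0 I K : Type) ⧸
        ((1 : Submodule R K).comap (ExtAux.Iinv0 I K).subtype)) ≃ₗ[R]
      ((ExtAux.SC I).moduleCatLeftHomologyData.H : Type) :=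
    (Submodule.quotEquivOfEq _ _ (ExtAux.ker_phibar I (K := K) hI).symm).trans
      ((ExtAux.phibar I K).quotKerEquivOfSurjective (ExtAux.phibar_surjective I hI))
  let P := ExtAux.res (ExtAux.pI I)
  let isoE : ((Ext R (ModuleCat R) 1).obj (Opposite.op (ModuleCat.of R (R ⧸ I)))).obj
      (ModuleCat.of R R) ≅ ((ExtAux.SC I).moduleCatLeftHomologyData.H) :=
    P.isoExt 1 (ModuleCat.of R R) ≪≫
      ShortComplex.homologyMapIso
        (((ExtAux.CX I).linearYonedaObj R (ModuleCat.of R R)).isoSc' 0 1 2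
          (by simp) (by simp)) ≪≫
      (ExtAux.SC I).moduleCatHomologyIso
  exact ⟨e2.trans isoE.toLinearEquiv.symm⟩
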